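/- Let n ≥ 3 be odd. Let A_n ∈ M_n(ℤ) be the skew-symmetric tridiagonal matrix with (A_n)_{i,i+1} = 1, (A_n)_{i+1,i} = -1 and all other entries 0. Then δ(A_n) = 0 if n ≡ 3 (mod 4) and δ(A_n) = 2 if n ≡ 1 (mod 4), where δ(B) = det(V(B)+V(B)ᵀ) mod 4. -/

import Mathlib

open Matrix

def upperV {n : ℕ} (B : Matrix (Fin n) (Fin n) ℤ) : Matrix (Fin n) (Fin n) ℤ :=
  Matrix.of fun i j => if i < j then B i j else if i = j then 1 else 0

def symS {n : ℕ} (B : Matrix (Fin n) (Fin n) ℤ) : Matrix (Fin n) (Fin n) ℤ :=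
  upperV B + (upperV B)ᵀ

def deltaInv {n : ℕ} (B : Matrix (Fin n) (Fin n) ℤ) : ℤ := (symS B).det % 4

/-- The tridiagonal skew-symmetric matrix `A_n`. -/
def An (n : ℕ) : Matrix (Fin n) (Fin n) ℤ :=
  Matrix.of fun i j =>
    if (i : ℕ) + 1 = (j : ℕ) then 1 else if (j : ℕ) + 1 = (i : ℕ) then -1 else 0

/-- The symmetric tridiagonal matrix with 2 on the diagonal, 1 next to it. -/
def T (n : ℕ) : Matrix (Fin n) (Fin n) ℤ :=
  Matrix.of fun i j =>
    if (i : ℕ) = j then 2 else if (i : ℕ) + 1 = j ∨ (j : ℕ) + 1 = (i : ℕ) then 1 else 0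

lemma T_apply (n : ℕ) (i j : Fin n) : T n i j =
    if (i : ℕ) = j then 2 else if (i : ℕ) + 1 = j ∨ (j : ℕ) + 1 = (i : ℕ) then 1 else 0 := rfl

lemma val_succAbove {n : ℕ} (p : Fin (n + 1)) (i : Fin n) :
    ((p.succAbove i : Fin (n + 1)) : ℕ) = if (i : ℕ) < p then (i : ℕ) else (i : ℕ) + 1 := by
  unfold Fin.succAbove
  split_ifs with h1 h2 h3 <;> simp_all [Fin.lt_iff_val_lt_val]

lemma detT : ∀ n : ℕ, (T n).det = n + 1 := by
  intro n
  induction n using Nat.strong_induction_on with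
  | _ n ih =>
    match n with
    | 0 => simp [Matrix.det_fin_zero]
    | 1 => simp [Matrix.det_fin_one, T_apply]
    | (m + 2) =>
      rw [Matrix.det_succ_row_zero, Fin.sum_univ_succ, Fin.sum_univ_succ]
      have hz : ∀ j : Fin m, T (m + 2) 0 j.succ.succ = 0 := by
        intro j; rw [T_apply]; simp [Fin.val_succ]
      have h00 : T (m + 2) 0 0 = 2 := by rw [T_apply]; simp
      have h01 : T (m + 2) 0 1 = 1 := by rw [T_apply]; norm_num
      have hsub1 : (T (m + 2)).submatrix Fin.succ ((0 : Fin (m + 2)).succAbove) = T (m + 1) := by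
        ext i j
        simp only [Matrix.submatrix_apply, T_apply, Fin.val_succ, val_succAbove, Fin.val_zero,
          Fin.val_one]
        simp only [show ¬ ((j : ℕ) < 0) by omega, if_false, ↓reduceIte]
        split_ifs <;> omega
      have hsub2 : ((T (m + 2)).submatrix Fin.succ ((1 : Fin (m + 2)).succAbove)).det
          = (T m).det := by
        rw [Matrix.det_succ_column_zero, Fin.sum_univ_succ]
        have hc : ∀ i : Fin m,
            (T (m + 2)).submatrix Fin.succ ((1 : Fin (m + 2)).succAbove) i.succ 0 = 0 := by
          intro i
          simp only [Matrix.submatrix_apply, T_apply, Fin.val_succ, val_succAbove, Fin.val_zero,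
            Fin.val_one]
          have : ((0 : Fin (m+1)) : ℕ) = 0 := rfl
          split_ifs <;> simp_all <;> omega
        have h0 : (T (m + 2)).submatrix Fin.succ ((1 : Fin (m + 2)).succAbove) 0 0 = 1 := by
          simp only [Matrix.submatrix_apply, T_apply, val_succAbove, Fin.val_zero, Fin.val_one]
          norm_num
        simp only [hc, h0, mul_zero, zero_mul, mul_one, Finset.sum_const_zero, add_zero]
        have hsub3 : ((T (m + 2)).submatrix Fin.succ ((1 : Fin (m + 2)).succAbove)).submatrix
            ((0 : Fin (m+1)).succAbove) Fin.succ = T m := by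
          ext i j
          simp only [Matrix.submatrix_apply, T_apply, Fin.val_succ, val_succAbove, Fin.val_zero,
            Fin.val_one]
          simp only [show ¬ ((j : ℕ) + 1 < 1) by omega, show ¬ ((i : ℕ) < 0) by omega, if_false, ↓reduceIte]
          split_ifs <;> omega
        rw [hsub3]
        simp
      simp only [Fin.succ_zero_eq_one, hz, h00, h01, hsub1, mul_zero, zero_mul, mul_one,
        Finset.sum_const_zero, add_zero]
      rw [hsub2, ih (m+1) (by omega), ih m (by omega)]
      simp only [Fin.val_zero, Fin.val_one, pow_zero, pow_one]
      push_cast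
      ring

lemma symS_An (n : ℕ) : symS (An n) = T n := by
  ext i j
  simp only [symS, Matrix.add_apply, Matrix.transpose_apply, upperV, An, Matrix.of_apply,
    T_apply, Fin.lt_iff_val_lt_val, Fin.ext_iff]
  split_ifs <;> omega

theorem stmt_16 {n : ℕ} (hn3 : 3 ≤ n) (hn : Odd n) :
    (n % 4 = 3 → deltaInv (An n) = 0) ∧ (n % 4 = 1 → deltaInv (An n) = 2) := by
  rw [deltaInv, symS_An, detT]
  constructor <;> intro h <;> omega
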